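/- Let F be an algebraically closed field whose characteristic is either 0 or a prime p > 3, and let n ≥ 1. Consider the Lie algebra gl_n(F) of n × n matrices over F with bracket ⁅A,B⁆ = AB − BA. For every matrix x ∈ gl_n(F) not lying in the center of gl_n(F) (equivalently, x is not a scalar multiple of the identity matrix), there exists y ∈ gl_n(F) such that the smallest Lie subalgebra of gl_n(F) containing x and y is gl_n(F) itself. -/

import Mathlib

open Matrix Finset MvPolynomial

attribute [local instance 100] LieRing.ofAssociativeRing

namespace GlGenAux

variable {F : Type} [Field F]

lemma vandermonde_extract {M : Type*} [AddCommGroup M] [Module F M]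
    (S : Submodule F M) (t : Finset F) (m : F → M)
    (hS : ∀ k : ℕ, (∑ c ∈ t, c ^ k • m c) ∈ S) :
    ∀ c ∈ t, m c ∈ S := by
  classical
  intro c hc
  set N := t.card with hN
  let e : Fin N ≃ {x // x ∈ t} := t.equivFin.symm
  let v : Fin N → F := fun k => (e k : F)
  have hv : Function.Injective v := fun a b hab => e.injective (Subtype.ext hab)
  have hdet : (Matrix.vandermonde v).det ≠ 0 := Matrix.det_vandermonde_ne_zero_iff.mpr hv
  have hdetT : ((Matrix.vandermonde v)ᵀ).det ≠ 0 := by rwa [Matrix.det_transpose]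
  have hVT : ((Matrix.vandermonde v)ᵀ)⁻¹ * (Matrix.vandermonde v)ᵀ = 1 :=
    Matrix.nonsing_inv_mul _ (isUnit_iff_ne_zero.mpr hdetT)
  let a : Fin N := e.symm ⟨c, hc⟩
  have hva : v a = c := by simp [v, a]
  have hsum : ∀ k : ℕ, (∑ b : Fin N, v b ^ k • m (v b)) ∈ S := by
    intro k
    have : (∑ b : Fin N, v b ^ k • m (v b)) = ∑ c ∈ t, c ^ k • m c := by
      rw [← Finset.sum_coe_sort t (fun c => c ^ k • m c)]
      exact Equiv.sum_comp e (fun s => (s : F) ^ k • m (s : F))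
    rw [this]; exact hS k
  have key : m c = ∑ k : Fin N,
      (((Matrix.vandermonde v)ᵀ)⁻¹ a k) • (∑ b : Fin N, v b ^ (k : ℕ) • m (v b)) := by
    have h1 : ∀ b : Fin N,
        (∑ k : Fin N, ((Matrix.vandermonde v)ᵀ)⁻¹ a k * (Matrix.vandermonde v)ᵀ k b)
          = (1 : Matrix (Fin N) (Fin N) F) a b := by
      intro b; rw [← Matrix.mul_apply, hVT]
    calc m c = ∑ b : Fin N, ((1 : Matrix (Fin N) (Fin N) F) a b) • m (v b) := by
          rw [Finset.sum_eq_single a]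
          · simp [hva, Matrix.one_apply]
          · intro b _ hb; simp [Matrix.one_apply, (Ne.symm hb)]
          · intro h; exact absurd (Finset.mem_univ a) h
      _ = ∑ b : Fin N, (∑ k : Fin N,
            ((Matrix.vandermonde v)ᵀ)⁻¹ a k * (Matrix.vandermonde v)ᵀ k b) • m (v b) := by
          simp_rw [h1]
      _ = ∑ b : Fin N, ∑ k : Fin N,
            (((Matrix.vandermonde v)ᵀ)⁻¹ a k * (Matrix.vandermonde v)ᵀ k b) • m (v b) := by
          simp_rw [Finset.sum_smul]
      _ = ∑ k : Fin N, ∑ b : Fin N,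
            (((Matrix.vandermonde v)ᵀ)⁻¹ a k * (Matrix.vandermonde v)ᵀ k b) • m (v b) :=
          Finset.sum_comm
      _ = ∑ k : Fin N,
            (((Matrix.vandermonde v)ᵀ)⁻¹ a k) • (∑ b : Fin N, v b ^ (k : ℕ) • m (v b)) := by
          refine Finset.sum_congr rfl (fun k _ => ?_)
          rw [Finset.smul_sum]
          refine Finset.sum_congr rfl (fun b _ => ?_)
          rw [smul_smul, Matrix.transpose_apply, Matrix.vandermonde]
          rfl
  rw [key]
  exact S.sum_mem (fun k _ => S.smul_mem _ (hsum k))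

lemma gen_top{n : ℕ} (α : Fin n → F) (x' : Matrix (Fin n) (Fin n) F)
    (hx' : ∀ i j : Fin n, i ≠ j → x' i j ≠ 0)
    (hβinj : ∀ i j k l : Fin n, i ≠ j → k ≠ l → α i - α j = α k - α l → i = k ∧ j = l)
    (hβ0 : ∀ i j : Fin n, i ≠ j → α i - α j ≠ 0)
    (htr : ∑ i, α i ≠ 0) (i₀ : Fin n) :
    LieSubalgebra.lieSpan F (Matrix (Fin n) (Fin n) F) {x', Matrix.diagonal α} = ⊤ := by
  classical
  set L := LieSubalgebra.lieSpan F (Matrix (Fin n) (Fin n) F) {x', Matrix.diagonal α} with hL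
  have hyL : Matrix.diagonal α ∈ L :=
    LieSubalgebra.subset_lieSpan (Set.mem_insert_of_mem _ rfl)
  have hxL : x' ∈ L := LieSubalgebra.subset_lieSpan (Set.mem_insert _ _)
  -- iterated brackets
  set z : ℕ → Matrix (Fin n) (Fin n) F :=
    fun k => Matrix.of fun i j => (α i - α j) ^ k * x' i j with hzdef
  have hz : ∀ k, z k ∈ L := by
    intro k
    induction k with
    | zero =>
      have : z 0 = x' := by ext i j; simp [hzdef]
      rwa [this]
    | succ k ih =>
      have : z (k + 1) = ⁅Matrix.diagonal α, z k⁆ := by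
        ext i j
        rw [Ring.lie_def]
        simp only [hzdef, Matrix.sub_apply, Matrix.diagonal_mul, Matrix.mul_diagonal,
          Matrix.of_apply]
        ring
      rw [this]
      exact L.lie_mem hyL ih
  -- decomposition into "eigen-components"
  set β : Fin n × Fin n → F := fun p => α p.1 - α p.2 with hβdef
  set m : F → Matrix (Fin n) (Fin n) F :=
    fun c => ∑ p ∈ univ.filter (fun p : Fin n × Fin n => β p = c),
      Matrix.single p.1 p.2 (x' p.1 p.2) with hmdef
  set t : Finset F := Finset.image β univ with htdef
  have hmoment : ∀ k : ℕ, (∑ c ∈ t, c ^ k • m c) = z k := by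
    intro k
    have h1 : ∀ c ∈ t, c ^ k • m c
        = ∑ p ∈ univ.filter (fun p : Fin n × Fin n => β p = c),
            Matrix.single p.1 p.2 ((β p) ^ k * x' p.1 p.2) := by
      intro c _
      rw [hmdef, Finset.smul_sum]
      refine Finset.sum_congr rfl (fun p hp => ?_)
      rw [Finset.mem_filter] at hp
      rw [Matrix.smul_single, hp.2, smul_eq_mul]
    rw [Finset.sum_congr rfl h1]
    have h2 : univ.filter (fun p : Fin n × Fin n => β p ∈ t) = univ := by
      refine Finset.filter_true_of_mem (fun p _ => ?_)
      exact Finset.mem_image_of_mem β (Finset.mem_univ p)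
    rw [Finset.sum_fiberwise_eq_sum_filter univ t β
      (fun p => Matrix.single p.1 p.2 ((β p) ^ k * x' p.1 p.2)), h2]
    ext i j
    rw [Matrix.sum_apply]
    rw [Finset.sum_eq_single (i, j)]
    · simp [Matrix.single, hzdef, hβdef]
    · intro p _ hp
      have : ¬(p.1 = i ∧ p.2 = j) := by
        rintro ⟨h1', h2'⟩; exact hp (Prod.ext h1' h2')
      simp [Matrix.single, this]
    · intro h; exact absurd (Finset.mem_univ _) h
  have hm : ∀ c ∈ t, m c ∈ L := by
    intro c hc
    have := vandermonde_extract (L : Submodule F (Matrix (Fin n) (Fin n) F)) t m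
      (fun k => by rw [hmoment k]; exact (LieSubalgebra.mem_toSubmodule (L' := L)).mpr (hz k)) c hc
    exact (LieSubalgebra.mem_toSubmodule (L' := L)).mp this
  -- standard basis matrices off the diagonal
  have hstd : ∀ i j : Fin n, i ≠ j → Matrix.single i j (1 : F) ∈ L := by
    intro i j hij
    have hct : β (i, j) ∈ t := Finset.mem_image_of_mem β (Finset.mem_univ _)
    have hfilter : univ.filter (fun p : Fin n × Fin n => β p = β (i, j)) = {(i, j)} := by
      ext p
      simp only [Finset.mem_filter, Finset.mem_univ, true_and, Finset.mem_singleton]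
      constructor
      · intro hp
        by_cases hd : p.1 = p.2
        · exfalso
          exact hβ0 i j hij (by simpa [hβdef, hd, sub_self] using hp.symm)
        · obtain ⟨h1, h2⟩ := hβinj p.1 p.2 i j hd hij hp
          exact Prod.ext h1 h2
      · rintro rfl; rfl
    have hmc : m (β (i, j)) = Matrix.single i j (x' i j) := by
      simp only [hmdef]
      rw [hfilter, Finset.sum_singleton]
    have h1 : Matrix.single i j (x' i j) ∈ L := hmc ▸ hm _ hct
    have h2 : Matrix.single i j (1 : F)
        = (x' i j)⁻¹ • Matrix.single i j (x' i j) := by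
      rw [Matrix.smul_single, smul_eq_mul, inv_mul_cancel₀ (hx' i j hij)]
    rw [h2]
    exact L.smul_mem _ h1
  -- diagonal differences
  have hH : ∀ i j : Fin n, i ≠ j →
      (Matrix.single i i (1 : F) - Matrix.single j j (1 : F)) ∈ L := by
    intro i j hij
    have : Matrix.single i i (1 : F) - Matrix.single j j (1 : F)
        = ⁅Matrix.single i j (1 : F), Matrix.single j i (1 : F)⁆ := by
      rw [Ring.lie_def, Matrix.single_mul_single_same, Matrix.single_mul_single_same,
        one_mul]
    rw [this]
    exact L.lie_mem (hstd i j hij) (hstd j i hij.symm)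
  -- conclude
  rw [eq_top_iff]
  rintro A -
  set c : F := (∑ i, A i i) / (∑ i, α i) with hc
  set B : Matrix (Fin n) (Fin n) F := A - c • Matrix.diagonal α with hB
  have htrB : ∑ i, B i i = 0 := by
    simp only [hB, Matrix.sub_apply, Matrix.smul_apply, Matrix.diagonal_apply_eq,
      smul_eq_mul, Finset.sum_sub_distrib, ← Finset.mul_sum]
    rw [hc, div_mul_cancel₀ _ htr, sub_self]
  have hdiagsum : ∑ i, B i i • (Matrix.single i i (1 : F)
        - Matrix.single i₀ i₀ (1 : F))
      = ∑ i, Matrix.single i i (B i i) := by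
    simp_rw [smul_sub, Finset.sum_sub_distrib, ← Finset.sum_smul, htrB, zero_smul, sub_zero,
      Matrix.smul_single, smul_eq_mul, mul_one]
  have hBsum : B = (∑ p ∈ univ.offDiag, Matrix.single p.1 p.2 (B p.1 p.2))
      + ∑ i, B i i • (Matrix.single i i (1 : F)
        - Matrix.single i₀ i₀ (1 : F)) := by
    rw [hdiagsum]
    ext i j
    rw [Matrix.add_apply, Matrix.sum_apply, Matrix.sum_apply]
    by_cases hij : i = j
    · subst hij
      have h1 : ∑ p ∈ univ.offDiag,
          Matrix.single p.1 p.2 (B p.1 p.2) i i = 0 := by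
        refine Finset.sum_eq_zero (fun p hp => ?_)
        rw [Finset.mem_offDiag] at hp
        have : ¬(p.1 = i ∧ p.2 = i) := by
          rintro ⟨h1', h2'⟩; exact hp.2.2 (h1'.trans h2'.symm)
        simp [Matrix.single, this]
      rw [h1, zero_add, Finset.sum_eq_single i]
      · simp [Matrix.single]
      · intro b _ hb
        simp [Matrix.single, hb]
      · intro h; exact absurd (Finset.mem_univ _) h
    · have h2 : ∑ i', Matrix.single i' i' (B i' i') i j = 0 := by
        refine Finset.sum_eq_zero (fun i' _ => ?_)
        have : ¬(i' = i ∧ i' = j) := by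
          rintro ⟨h1', h2'⟩; exact hij (h1'.symm.trans h2')
        simp [Matrix.single, this]
      rw [h2, add_zero, Finset.sum_eq_single (i, j)]
      · simp [Matrix.single]
      · intro p _ hp
        have : ¬(p.1 = i ∧ p.2 = j) := by
          rintro ⟨h1', h2'⟩; exact hp (Prod.ext h1' h2')
        simp [Matrix.single, this]
      · intro h
        exfalso
        apply h
        rw [Finset.mem_offDiag]
        exact ⟨Finset.mem_univ _, Finset.mem_univ _, hij⟩
  have hBL : B ∈ L := by
    rw [hBsum]
    refine L.add_mem ?_ ?_
    · refine L.toSubmodule.sum_mem (fun p hp => ?_)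
      rw [Finset.mem_offDiag] at hp
      have : Matrix.single p.1 p.2 (B p.1 p.2)
          = B p.1 p.2 • Matrix.single p.1 p.2 (1 : F) := by
        rw [Matrix.smul_single, smul_eq_mul, mul_one]
      rw [this]
      exact L.smul_mem _ (hstd p.1 p.2 hp.2.2)
    · refine L.toSubmodule.sum_mem (fun i _ => ?_)
      by_cases hi : i = i₀
      · subst hi
        rw [sub_self, smul_zero]
        exact L.toSubmodule.zero_mem
      · exact L.smul_mem _ (hH i i₀ hi)
  have : A = c • Matrix.diagonal α + B := by rw [hB]; abel
  rw [this]
  exact L.add_mem (L.smul_mem _ hyL) hBL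

lemma exists_alpha [Infinite F] (h2 : (2 : F) ≠ 0) (n : ℕ) (hn : 0 < n) :
    ∃ α : Fin n → F,
      (∀ i j k l : Fin n, i ≠ j → k ≠ l → α i - α j = α k - α l → i = k ∧ j = l) ∧
      (∀ i j : Fin n, i ≠ j → α i - α j ≠ 0) ∧ (∑ i, α i) ≠ 0 := by
  classical
  -- the three polynomials
  set S : MvPolynomial (Fin n) F := ∑ i, X i with hS
  set P1 : MvPolynomial (Fin n) F := ∏ p ∈ univ.offDiag, (X p.1 - X p.2) with hP1
  set P2 : MvPolynomial (Fin n) F :=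
    ∏ q ∈ (univ.offDiag ×ˢ univ.offDiag).filter
        (fun q : (Fin n × Fin n) × Fin n × Fin n => q.1 ≠ q.2),
      (X q.1.1 - X q.1.2 - X q.2.1 + X q.2.2) with hP2
  have hfac : ∀ (a b c d : Fin n), a ≠ b → c ≠ d → (a, b) ≠ (c, d) →
      (X a - X b - X c + X d : MvPolynomial (Fin n) F) ≠ 0 := by
    intro a b c d hab hcd hne
    by_cases had : a = d
    · subst had
      intro h0
      have := congrArg (eval (fun s => if s = a then (1 : F) else 0)) h0
      simp only [map_add, map_sub, eval_X, map_zero, if_pos rfl, if_true,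
        if_neg (Ne.symm hab), if_neg (fun h : c = a => hcd (h.trans rfl))] at this
      exact h2 (by linear_combination this)
    · by_cases hca : c = a
      · subst hca
        have hbd : b ≠ d := fun h => hne (by rw [h])
        intro h0
        have := congrArg (eval (fun s => if s = d then (1 : F) else 0)) h0
        simp only [map_add, map_sub, eval_X, map_zero,
          if_neg had, if_neg hbd, if_pos rfl] at this
        simp at this
      · intro h0
        have := congrArg (eval (fun s => if s = a then (1 : F) else 0)) h0
        simp only [map_add, map_sub, eval_X, map_zero, if_pos rfl,
          if_neg (Ne.symm hab), if_neg hca, if_neg (fun h : d = a => had h.symm)] at this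
        simp at this
  have hSne : S ≠ 0 := by
    intro h0
    have := congrArg (eval (fun s => if s = (⟨0, hn⟩ : Fin n) then (1 : F) else 0)) h0
    rw [hS] at this
    simp only [map_sum, eval_X, map_zero] at this
    rw [Finset.sum_ite_eq' univ (⟨0, hn⟩ : Fin n) (fun _ => (1 : F))] at this
    simp at this
  have hP1ne : P1 ≠ 0 := by
    rw [hP1]
    refine Finset.prod_ne_zero_iff.mpr (fun p hp => ?_)
    rw [Finset.mem_offDiag] at hp
    intro h0
    have := congrArg (eval (fun s => if s = p.1 then (1 : F) else 0)) h0
    simp only [map_sub, eval_X, map_zero, if_pos rfl, if_neg (Ne.symm hp.2.2)] at this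
    simp at this
  have hP2ne : P2 ≠ 0 := by
    rw [hP2]
    refine Finset.prod_ne_zero_iff.mpr (fun q hq => ?_)
    rw [Finset.mem_filter, Finset.mem_product, Finset.mem_offDiag, Finset.mem_offDiag] at hq
    exact hfac _ _ _ _ hq.1.1.2.2 hq.1.2.2.2 hq.2
  have hQne : S * P1 * P2 ≠ 0 := mul_ne_zero (mul_ne_zero hSne hP1ne) hP2ne
  have : ∃ α : Fin n → F, eval α (S * P1 * P2) ≠ 0 := by
    by_contra h
    push_neg at h
    exact hQne (MvPolynomial.funext (fun α => by rw [h α, map_zero]))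
  obtain ⟨α, hα⟩ := this
  rw [_root_.map_mul, _root_.map_mul] at hα
  have hSα : eval α S ≠ 0 := fun h => hα (by rw [h, zero_mul, zero_mul])
  have hP1α : eval α P1 ≠ 0 := fun h => hα (by rw [h, mul_zero, zero_mul])
  have hP2α : eval α P2 ≠ 0 := fun h => hα (by rw [h, mul_zero])
  refine ⟨α, ?_, ?_, ?_⟩
  · intro i j k l hij hkl heq
    by_contra hne
    have hmem : ((i, j), (k, l)) ∈ (univ.offDiag ×ˢ univ.offDiag).filter
        (fun q : (Fin n × Fin n) × Fin n × Fin n => q.1 ≠ q.2) := by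
      rw [Finset.mem_filter, Finset.mem_product, Finset.mem_offDiag, Finset.mem_offDiag]
      refine ⟨⟨⟨Finset.mem_univ _, Finset.mem_univ _, hij⟩,
        ⟨Finset.mem_univ _, Finset.mem_univ _, hkl⟩⟩, ?_⟩
      intro h
      rw [Prod.mk.injEq] at h
      exact hne ⟨h.1, h.2⟩
    apply hP2α
    rw [hP2, map_prod]
    refine Finset.prod_eq_zero hmem ?_
    simp only [map_add, map_sub, eval_X]
    linear_combination heq
  · intro i j hij
    have hmem : (i, j) ∈ univ.offDiag := by
      rw [Finset.mem_offDiag]; exact ⟨Finset.mem_univ _, Finset.mem_univ _, hij⟩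
    intro h0
    apply hP1α
    rw [hP1, map_prod]
    refine Finset.prod_eq_zero hmem ?_
    simpa using h0
  · intro h0
    apply hSα
    rw [hS, map_sum]
    simpa using h0

section Perm

variable {n : ℕ}

/-- column-permutation matrix -/
noncomputable def permM (σ : Equiv.Perm (Fin n)) : Matrix (Fin n) (Fin n) F :=
  (1 : Matrix (Fin n) (Fin n) F).submatrix _root_.id ⇑σ

lemma permM_mul (σ : Equiv.Perm (Fin n)) (M : Matrix (Fin n) (Fin n) F) :
    (permM σ) * M = M.submatrix ⇑σ⁻¹ _root_.id := by
  ext a b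
  simp only [permM, Matrix.mul_apply, Matrix.submatrix_apply, _root_.id, Matrix.one_apply]
  rw [Finset.sum_eq_single (σ⁻¹ a)]
  · simp
  · intro k _ hk
    rw [if_neg, zero_mul]
    intro h
    exact hk (by rw [h]; simp)
  · intro h; exact absurd (Finset.mem_univ _) h

lemma mul_permM (σ : Equiv.Perm (Fin n)) (M : Matrix (Fin n) (Fin n) F) :
    M * (permM σ) = M.submatrix _root_.id ⇑σ := by
  ext a b
  simp only [permM, Matrix.mul_apply, Matrix.submatrix_apply, _root_.id, Matrix.one_apply]
  rw [Finset.sum_eq_single (σ b)]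
  · simp
  · intro k _ hk
    rw [if_neg hk, mul_zero]
  · intro h; exact absurd (Finset.mem_univ _) h

lemma permM_mul_permM (σ : Equiv.Perm (Fin n)) :
    (permM σ) * (permM σ⁻¹ : Matrix (Fin n) (Fin n) F) = 1 := by
  rw [permM_mul]
  ext a b
  simp only [permM, Matrix.submatrix_apply, _root_.id, Matrix.one_apply,
    EmbeddingLike.apply_eq_iff_eq]

lemma permM_conj (σ : Equiv.Perm (Fin n)) (x : Matrix (Fin n) (Fin n) F) :
    (permM σ⁻¹) * x * (permM σ) = x.submatrix ⇑σ ⇑σ := by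
  rw [permM_mul, mul_permM, Matrix.submatrix_submatrix, inv_inv]
  rfl

lemma exists_entry_witness (x : Matrix (Fin n) (Fin n) F)
    (hns : ∀ c : F, x ≠ c • (1 : Matrix (Fin n) (Fin n) F))
    (i j : Fin n) (hij : i ≠ j) :
    ∃ g h : Matrix (Fin n) (Fin n) F, g * h = 1 ∧ h * g = 1 ∧ (g * x * h) i j ≠ 0 := by
  classical
  have hperm : ∀ a b : Fin n, a ≠ b → ∃ σ : Equiv.Perm (Fin n), σ i = a ∧ σ j = b := by
    intro a b hab
    set j' := (Equiv.swap i a) j with hj'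
    have hj'a : j' ≠ a := by
      by_cases hja : j = a
      · rw [hj', hja, Equiv.swap_apply_right]
        exact fun h => hij (h.trans hja.symm)
      · rw [hj', Equiv.swap_apply_of_ne_of_ne (Ne.symm hij) hja]
        exact hja
    refine ⟨(Equiv.swap i a).trans (Equiv.swap j' b), ?_, ?_⟩
    · simp only [Equiv.trans_apply, Equiv.swap_apply_left]
      exact Equiv.swap_apply_of_ne_of_ne (Ne.symm hj'a) hab
    · simp only [Equiv.trans_apply, ← hj', Equiv.swap_apply_left]
  by_cases hoff : ∃ a b : Fin n, a ≠ b ∧ x a b ≠ 0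
  · obtain ⟨a, b, hab, hxab⟩ := hoff
    obtain ⟨σ, hσi, hσj⟩ := hperm a b hab
    refine ⟨permM σ⁻¹, permM σ, ?_, ?_, ?_⟩
    · simpa using permM_mul_permM σ⁻¹
    · simpa using permM_mul_permM σ
    · rw [permM_conj]
      simpa [Matrix.submatrix_apply, hσi, hσj] using hxab
  · push_neg at hoff
    have hdd : ∃ a b : Fin n, x a a ≠ x b b := by
      by_contra h
      push_neg at h
      apply hns (x i i)
      ext a b
      by_cases hab : a = b
      · subst hab
        simp [Matrix.one_apply, h a i]
      · simp [Matrix.one_apply, hab, hoff a b hab]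
    obtain ⟨a, b, hab2⟩ := hdd
    have hab : a ≠ b := fun h => hab2 (by rw [h])
    obtain ⟨σ, hσi, hσj⟩ := hperm a b hab
    set x₂ := x.submatrix ⇑σ ⇑σ with hx₂
    set E := Matrix.single i j (1 : F) with hE
    have hEE : E * E = 0 := by
      rw [hE, Matrix.single_mul_single_of_ne (1:F) i j i (Ne.symm hij) (1:F)]
    have hg2h2 : (1 + E) * (1 - E) = 1 := by
      have h1 : (1 + E) * (1 - E) = 1 - E * E := by noncomm_ring
      rw [h1, hEE, sub_zero]
    have hh2g2 : (1 - E) * (1 + E) = 1 := by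
      have h1 : (1 - E) * (1 + E) = 1 - E * E := by noncomm_ring
      rw [h1, hEE, sub_zero]
    have hexp : (1 + E) * x₂ * (1 - E) = x₂ + E * x₂ - x₂ * E - E * (x₂ * E) := by
      noncomm_ring
    have hentry : ((1 + E) * x₂ * (1 - E)) i j = x b b - x a a := by
      rw [hexp]
      simp only [Matrix.sub_apply, Matrix.add_apply, hE,
        Matrix.single_mul_apply_same, Matrix.mul_single_apply_same,
        one_mul, mul_one]
      have e1 : x₂ i j = 0 := hoff a b hab ▸ (by rw [hx₂, Matrix.submatrix_apply, hσi, hσj])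
      have e2 : x₂ j i = 0 := hoff b a hab.symm ▸ (by rw [hx₂, Matrix.submatrix_apply, hσi, hσj])
      have e3 : x₂ j j = x b b := by rw [hx₂, Matrix.submatrix_apply, hσj]
      have e4 : x₂ i i = x a a := by rw [hx₂, Matrix.submatrix_apply, hσi]
      rw [e1, e2, e3, e4]
      ring
    refine ⟨(1 + E) * permM σ⁻¹, permM σ * (1 - E), ?_, ?_, ?_⟩
    · calc (1 + E) * permM σ⁻¹ * (permM σ * (1 - E))
          = (1 + E) * (permM σ⁻¹ * permM σ) * (1 - E) := by
            rw [mul_assoc, mul_assoc, mul_assoc]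
        _ = 1 := by
            have : (permM σ⁻¹ : Matrix (Fin n) (Fin n) F) * permM σ = 1 := by
              simpa using permM_mul_permM σ⁻¹
            rw [this, mul_one, hg2h2]
    · calc permM σ * (1 - E) * ((1 + E) * permM σ⁻¹)
          = permM σ * ((1 - E) * (1 + E)) * permM σ⁻¹ := by
            rw [mul_assoc, mul_assoc, mul_assoc]
        _ = 1 := by
            rw [hh2g2, mul_one, permM_mul_permM σ]
    · have : (1 + E) * permM σ⁻¹ * x * (permM σ * (1 - E))
          = (1 + E) * x₂ * (1 - E) := by
        rw [hx₂, ← permM_conj σ x]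
        noncomm_ring
      rw [this, hentry]
      exact sub_ne_zero_of_ne (Ne.symm hab2)

lemma exists_good_conj [Infinite F] (x : Matrix (Fin n) (Fin n) F)
    (hns : ∀ c : F, x ≠ c • (1 : Matrix (Fin n) (Fin n) F)) :
    ∃ g h : Matrix (Fin n) (Fin n) F, g * h = 1 ∧ h * g = 1 ∧
      ∀ i j : Fin n, i ≠ j → (g * x * h) i j ≠ 0 := by
  classical
  set R := MvPolynomial (Fin n × Fin n) F with hR
  set G : Matrix (Fin n) (Fin n) R := Matrix.of fun p q => MvPolynomial.X (p, q) with hG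
  set A : Matrix (Fin n) (Fin n) R :=
    G * (x.map MvPolynomial.C) * G.adjugate with hA
  -- evaluation facts
  have hevalG : ∀ v : Matrix (Fin n) (Fin n) F,
      (MvPolynomial.eval (fun pq : Fin n × Fin n => v pq.1 pq.2)).mapMatrix G = v := by
    intro v
    ext a b
    simp [hG, RingHom.mapMatrix_apply]
  have hevalA : ∀ v : Matrix (Fin n) (Fin n) F,
      (MvPolynomial.eval (fun pq : Fin n × Fin n => v pq.1 pq.2)).mapMatrix A
        = v * x * v.adjugate := by
    intro v
    set φ := (MvPolynomial.eval (fun pq : Fin n × Fin n => v pq.1 pq.2)) with hφ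
    have h1 : φ.mapMatrix (x.map MvPolynomial.C) = x := by
      ext a b
      simp [hφ, RingHom.mapMatrix_apply]
    rw [hA, _root_.map_mul, _root_.map_mul, h1, RingHom.map_adjugate, hevalG]
  have hevaldet : ∀ v : Matrix (Fin n) (Fin n) F,
      MvPolynomial.eval (fun pq : Fin n × Fin n => v pq.1 pq.2) G.det = v.det := by
    intro v
    rw [RingHom.map_det, hevalG]
  -- nonzero polynomial
  have hdetne : G.det ≠ (0 : R) := by
    intro h0
    have := congrArg (MvPolynomial.eval
      (fun pq : Fin n × Fin n => (1 : Matrix (Fin n) (Fin n) F) pq.1 pq.2)) h0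
    rw [hevaldet, map_zero] at this
    simp at this
  have hAne : ∀ p ∈ univ.offDiag, A p.1 p.2 ≠ (0 : R) := by
    intro p hp
    rw [Finset.mem_offDiag] at hp
    obtain ⟨g, h, hgh, hhg, hne⟩ := exists_entry_witness x hns p.1 p.2 hp.2.2
    have hdetg : g.det ≠ 0 := by
      intro h0
      have := congrArg Matrix.det hgh
      rw [Matrix.det_mul, h0, zero_mul, Matrix.det_one] at this
      exact zero_ne_one this
    have hadj : g.adjugate = g.det • h := by
      have hinv : g⁻¹ = h := Matrix.inv_eq_right_inv hgh
      rw [← hinv, Matrix.inv_def, smul_smul,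
        Ring.mul_inverse_cancel _ (isUnit_iff_ne_zero.mpr hdetg), one_smul]
    intro h0
    have := congrArg (MvPolynomial.eval (fun pq : Fin n × Fin n => g pq.1 pq.2)) h0
    rw [map_zero] at this
    have hentry : MvPolynomial.eval (fun pq : Fin n × Fin n => g pq.1 pq.2) (A p.1 p.2)
        = (g * x * g.adjugate) p.1 p.2 := by
      have := hevalA g
      calc MvPolynomial.eval (fun pq : Fin n × Fin n => g pq.1 pq.2) (A p.1 p.2)
          = ((MvPolynomial.eval (fun pq : Fin n × Fin n => g pq.1 pq.2)).mapMatrix A) p.1 p.2 :=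
            rfl
        _ = (g * x * g.adjugate) p.1 p.2 := by rw [this]
    rw [hentry, hadj, Matrix.mul_smul, Matrix.smul_apply, smul_eq_mul] at this
    exact hne (by
      rcases mul_eq_zero.mp this with h' | h'
      · exact absurd h' hdetg
      · exact h')
  have hPne : G.det * ∏ p ∈ univ.offDiag, A p.1 p.2 ≠ (0 : R) :=
    mul_ne_zero hdetne (Finset.prod_ne_zero_iff.mpr hAne)
  have hexists : ∃ pt : Fin n × Fin n → F,
      MvPolynomial.eval pt (G.det * ∏ p ∈ univ.offDiag, A p.1 p.2) ≠ 0 := by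
    by_contra hcon
    push_neg at hcon
    exact hPne (MvPolynomial.funext (fun pt => by rw [hcon pt, map_zero]))
  obtain ⟨pt, hpt⟩ := hexists
  set v : Matrix (Fin n) (Fin n) F := Matrix.of fun a b => pt (a, b) with hv
  have hptv : pt = fun pq : Fin n × Fin n => v pq.1 pq.2 := by
    funext pq; simp [hv]
  rw [hptv, _root_.map_mul, hevaldet] at hpt
  have hvdet : v.det ≠ 0 := fun h0 => hpt (by rw [h0, zero_mul])
  have hprod : ∀ p ∈ univ.offDiag, (v * x * v.adjugate) p.1 p.2 ≠ 0 := by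
    intro p hp
    intro h0
    apply hpt
    rw [_root_.map_prod]
    have : MvPolynomial.eval (fun pq : Fin n × Fin n => v pq.1 pq.2) (A p.1 p.2) = 0 := by
      have hh : (MvPolynomial.eval (fun pq : Fin n × Fin n => v pq.1 pq.2)).mapMatrix A
          = v * x * v.adjugate := hevalA v
      calc MvPolynomial.eval (fun pq : Fin n × Fin n => v pq.1 pq.2) (A p.1 p.2)
          = ((MvPolynomial.eval (fun pq : Fin n × Fin n => v pq.1 pq.2)).mapMatrix A) p.1 p.2 :=
            rfl
        _ = 0 := by rw [hh]; exact h0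
    rw [Finset.prod_eq_zero hp this, mul_zero]
  refine ⟨v, (v.det)⁻¹ • v.adjugate, ?_, ?_, ?_⟩
  · rw [Matrix.mul_smul, Matrix.mul_adjugate, smul_smul, inv_mul_cancel₀ hvdet, one_smul]
  · rw [Matrix.smul_mul, Matrix.adjugate_mul, smul_smul, inv_mul_cancel₀ hvdet, one_smul]
  · intro i j hij
    have hmem : (i, j) ∈ univ.offDiag := by
      rw [Finset.mem_offDiag]; exact ⟨Finset.mem_univ _, Finset.mem_univ _, hij⟩
    have := hprod (i, j) hmem
    rw [Matrix.mul_smul, Matrix.smul_apply, smul_eq_mul]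
    exact mul_ne_zero (inv_ne_zero hvdet) this

end Perm

section Final

variable {n : ℕ}

/-- conjugationby an invertible matrix as a Lie algebra equivalence -/
noncomputable def conjLieEquiv (g h : Matrix (Fin n) (Fin n) F)
    (hgh : g * h = 1) (hhg : h * g = 1) :
    Matrix (Fin n) (Fin n) F ≃ₗ⁅F⁆ Matrix (Fin n) (Fin n) F :=
  { toFun := fun A => h * A * g
    map_add' := fun A B => by noncomm_ring
    map_smul' := fun c A => by
      simp [Matrix.mul_smul, Matrix.smul_mul]
    map_lie' := by
      intro A B
      simp only [Ring.lie_def]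
      calc h * (A * B - B * A) * g
          = h * A * (g * h) * B * g - h * B * (g * h) * A * g := by
            rw [hgh]; noncomm_ring
        _ = (h * A * g) * (h * B * g) - (h * B * g) * (h * A * g) := by noncomm_ring
    invFun := fun A => g * A * h
    left_inv := fun A => by
      show g * (h * A * g) * h = A
      calc g * (h * A * g) * h = (g * h) * A * (g * h) := by noncomm_ring
        _ = A := by rw [hgh]; noncomm_ring
    right_inv := fun A => by
      show h * (g * A * h) * g = A
      calc h * (g * A * h) * g = (h * g) * A * (h * g) := by noncomm_ring
        _ = A := by rw [hhg]; noncomm_ring }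

lemma lieSpan_pair_map_top (φ : Matrix (Fin n) (Fin n) F ≃ₗ⁅F⁆ Matrix (Fin n) (Fin n) F)
    (a b : Matrix (Fin n) (Fin n) F)
    (hspan : LieSubalgebra.lieSpan F (Matrix (Fin n) (Fin n) F) {a, b} = ⊤) :
    LieSubalgebra.lieSpan F (Matrix (Fin n) (Fin n) F) {φ a, φ b} = ⊤ := by
  rw [eq_top_iff]
  rintro A -
  have hle : LieSubalgebra.lieSpan F (Matrix (Fin n) (Fin n) F) {a, b}
      ≤ LieSubalgebra.comap (φ : Matrix (Fin n) (Fin n) F →ₗ⁅F⁆ Matrix (Fin n) (Fin n) F)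
        (LieSubalgebra.lieSpan F (Matrix (Fin n) (Fin n) F) {φ a, φ b}) := by
    rw [LieSubalgebra.lieSpan_le]
    rintro z (rfl | rfl)
    · exact LieSubalgebra.subset_lieSpan (Set.mem_insert _ _)
    · exact LieSubalgebra.subset_lieSpan (Set.mem_insert_of_mem _ rfl)
  have h1 : φ.symm A ∈ LieSubalgebra.lieSpan F (Matrix (Fin n) (Fin n) F) {a, b} := by
    rw [hspan]; trivial
  have h2 := hle h1
  have h3 : φ (φ.symm A) ∈ LieSubalgebra.lieSpan F (Matrix (Fin n) (Fin n) F) {φ a, φ b} := h2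
  rwa [LieEquiv.apply_symm_apply] at h3

lemma scalar_mem_center (c : F) :
    (c • (1 : Matrix (Fin n) (Fin n) F)) ∈ LieAlgebra.center F (Matrix (Fin n) (Fin n) F) := by
  rw [LieAlgebra.center, LieModule.mem_maxTrivSubmodule]
  intro m
  rw [Ring.lie_def]
  simp [Matrix.mul_smul, Matrix.smul_mul]

end Final

end GlGenAux

/-- In `gl_n(F)` (with the commutator bracket) over an algebraically closed field
of characteristic 0 or `p > 3`, every non-central matrix can be completed to a generating pair. -/
theorem gl_generated_by_one_and_a_half
    (F : Type) [Field F] [IsAlgClosed F]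
    (hchar : CharP F 0 ∨ ∃ p : ℕ, Nat.Prime p ∧ 3 < p ∧ CharP F p)
    (n : ℕ) (hn : 1 ≤ n) (x : Matrix (Fin n) (Fin n) F)
    (hx : x ∉ LieAlgebra.center F (Matrix (Fin n) (Fin n) F)) :
    ∃ y : Matrix (Fin n) (Fin n) F,
      LieSubalgebra.lieSpan F (Matrix (Fin n) (Fin n) F) {x, y} = ⊤ := by
  classical
  have h2 : (2 : F) ≠ 0 := by
    rcases hchar with h0 | ⟨p, hp, hp3, hpc⟩
    · haveI := h0
      have : ((2 : ℕ) : F) ≠ 0 := by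
        rw [Ne, CharP.cast_eq_zero_iff F 0 2]
        norm_num
      simpa using this
    · haveI := hpc
      have : ((2 : ℕ) : F) ≠ 0 := by
        rw [Ne, CharP.cast_eq_zero_iff F p 2]
        intro hdvd
        have := Nat.le_of_dvd (by norm_num) hdvd
        omega
      simpa using this
  have hns : ∀ c : F, x ≠ c • (1 : Matrix (Fin n) (Fin n) F) := by
    intro c hc
    exact hx (hc ▸ GlGenAux.scalar_mem_center c)
  obtain ⟨g, h, hgh, hhg, hgood⟩ := GlGenAux.exists_good_conj x hns
  obtain ⟨α, hβinj, hβ0, htr⟩ := GlGenAux.exists_alpha h2 n hn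
  set x' := g * x * h with hx'
  have hspan := GlGenAux.gen_top α x' (fun i j hij => hgood i j hij) hβinj hβ0 htr ⟨0, hn⟩
  set φ := GlGenAux.conjLieEquiv g h hgh hhg with hφ
  have hφx : φ x' = x := by
    show h * (g * x * h) * g = x
    calc h * (g * x * h) * g = (h * g) * x * (h * g) := by noncomm_ring
      _ = x := by rw [hhg]; noncomm_ring
  refine ⟨φ (Matrix.diagonal α), ?_⟩
  have := GlGenAux.lieSpan_pair_map_top φ x' (Matrix.diagonal α) hspan
  rwa [hφx] at this
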